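/- In the setting of the Christoffel–Darboux-based construction: the recurrence coefficients of the orthonormal polynomials for the incremented weight w̃^{(a,b,c+1,d)} are given in terms of those for w̃^{(a,b,c,d)} by α̃_n^{(a,b,c+1,d)} = (R̃_{n+2}(1)/R̃_{n+1}(1)) β̃_{n+1} − (R̃_{n+1}(1)/R̃_n(1)) β̃_n + α̃_{n+1} and β̃_n^{(a,b,c+1,d)} = (C_n/C_{n+1}) (R̃_n(1)/R̃_{n+1}(1)) β̃_n, where all unsuperscripted quantities refer to the (a,b,c,d) family and C_n is the Christoffel–Darboux normalization constant. -/

import Mathlib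

open MeasureTheory Set

/-- the three-term recurrence coefficients of the orthonormal
polynomials for the incremented weight `w̃^{(a,b,c+1,d)}`, expressed through
those of the `(a,b,c,d)` family via the Christoffel–Darboux construction. -/
theorem stmt15
    (α β : ℝ) (hα : -1 ≤ α) (hαβ : α < β) (hβ : β ≤ 1)
    (a b c d : ℝ)
    (w : ℝ → ℝ → ℝ)
    (hw : ∀ e x, w e x = (β - x) ^ a * (x - α) ^ b * (1 - x) ^ e * (1 + x) ^ d)
    (ω : ℝ → ℝ) (hω : ∀ e, ω e = ∫ x in Ioo α β, w e x)
    (R : ℕ → ℝ → ℝ)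
    (hRpoly : ∀ n, ∃ p : Polynomial ℝ, p.natDegree = n ∧ ∀ x, R n x = p.eval x)
    (hRorth : ∀ m n, (1 / ω c) * ∫ x in Ioo α β, R m x * R n x * w c x
      = if m = n then 1 else 0)
    (A B : ℕ → ℝ)
    (hrec : ∀ n x, x * R n x = B n * R (n + 1) x + A n * R n x +
      (if n = 0 then 0 else B (n - 1) * R (n - 1) x))
    (hBne : ∀ n, B n ≠ 0)
    (hR1ne : ∀ n, R n 1 ≠ 0)
    (hpos : ∀ n, 0 < ω c * R n 1 * R (n + 1) 1 * B n)
    (C : ℕ → ℝ)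
    (hC : ∀ n, C n = Real.sqrt (ω (c + 1) / (ω c * R n 1 * R (n + 1) 1 * B n)))
    (hCne : ∀ n, C n ≠ 0)
    -- the orthonormal family for the incremented weight, given by the
    -- Christoffel--Darboux sums
    (R' : ℕ → ℝ → ℝ)
    (hR' : ∀ n x, R' n x = C n * ∑ k ∈ Finset.range (n + 1), R k 1 * R k x)
    (A' B' : ℕ → ℝ)
    (hrec' : ∀ n x, x * R' n x = B' n * R' (n + 1) x + A' n * R' n x +
      (if n = 0 then 0 else B' (n - 1) * R' (n - 1) x)) :
    ∀ n, A' n = (R (n + 2) 1 / R (n + 1) 1) * B (n + 1)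
        - (R (n + 1) 1 / R n 1) * B n + A (n + 1) ∧
      B' n = (C n / C (n + 1)) * (R n 1 / R (n + 1) 1) * B n := by

  classical
  choose p hpdeg hpev using hRpoly
  -- basic nonvanishing facts
  have hωc : ω c ≠ 0 := by
    intro h
    have h0 := hpos 0
    rw [h] at h0
    simp at h0
  have hDne : ∀ n, (ω c * R n 1 * R (n + 1) 1 * B n) ≠ 0 := fun n => ne_of_gt (hpos n)
  have hCsq : ∀ n, C n ^ 2 * (ω c * R n 1 * R (n + 1) 1 * B n) = ω (c + 1) := by
    intro n
    have harg : 0 ≤ ω (c + 1) / (ω c * R n 1 * R (n + 1) 1 * B n) := by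
      by_contra h
      push_neg at h
      exact hCne n ((hC n).trans (Real.sqrt_eq_zero'.mpr h.le))
    rw [hC n, Real.sq_sqrt harg, div_mul_cancel₀ _ (hDne n)]
  -- the three-term recurrence at x = 1 (for positive index)
  have hrec1 : ∀ n, R (n + 1) 1 = B (n + 1) * R (n + 2) 1 + A (n + 1) * R (n + 1) 1
      + B n * R n 1 := by
    intro n
    have h := hrec (n + 1) 1
    rw [if_neg (Nat.succ_ne_zero n), Nat.add_sub_cancel, one_mul] at h
    linarith
  -- Christoffel--Darboux identity at y = 1
  have hCD : ∀ n x, x * (∑ k ∈ Finset.range (n + 1), R k 1 * R k x)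
      = (∑ k ∈ Finset.range (n + 1), R k 1 * R k x)
        + B n * (R n 1 * R (n + 1) x - R (n + 1) 1 * R n x) := by
    intro n x
    induction n with
    | zero =>
      simp only [Finset.sum_range_succ, Finset.sum_range_zero, zero_add]
      have h1 := hrec 0 x
      have h2 := hrec 0 1
      rw [if_pos rfl, one_mul] at h2
      rw [if_pos rfl] at h1
      linear_combination R 0 1 * h1 - R 0 x * h2
    | succ m ih =>
      rw [Finset.sum_range_succ]
      have h1 := hrec (m + 1) x
      have h2 := hrec (m + 1) 1
      rw [if_neg (Nat.succ_ne_zero m), Nat.add_sub_cancel] at h1 h2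
      rw [one_mul] at h2
      linear_combination ih + R (m + 1) 1 * h1 - R (m + 1) x * h2
  -- relations among the new coefficients, cleared of denominators
  have hbC1 : ∀ n, ((C n / C (n + 1)) * (R n 1 / R (n + 1) 1) * B n) * (C (n + 1) * R (n + 1) 1)
      = C n * (R n 1 * B n) := by
    intro n
    have hc := hCne (n + 1)
    have hr := hR1ne (n + 1)
    field_simp
  have he : ∀ n, C n ^ 2 * (R n 1 * B n) = C (n + 1) ^ 2 * (R (n + 2) 1 * B (n + 1)) := by
    intro n
    have h1 := hCsq n
    have h2 := hCsq (n + 1)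
    apply mul_left_cancel₀ (mul_ne_zero hωc (hR1ne (n + 1)))
    linear_combination h1 - h2
  have hbC2 : ∀ n, ((C n / C (n + 1)) * (R n 1 / R (n + 1) 1) * B n) * (C n * R (n + 1) 1)
      = C (n + 1) * (B (n + 1) * R (n + 2) 1) := by
    intro n
    have hc := hCne (n + 1)
    have hr := hR1ne (n + 1)
    field_simp
    linear_combination he n
  have haa4 : ∀ n, ((R (n + 2) 1 / R (n + 1) 1) * B (n + 1) - (R (n + 1) 1 / R n 1) * B n
        + A (n + 1)) * (R (n + 1) 1 * R n 1)
      = R (n + 2) 1 * R n 1 * B (n + 1) - R (n + 1) 1 ^ 2 * B n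
        + A (n + 1) * (R (n + 1) 1 * R n 1) := by
    intro n
    have hr0 := hR1ne n
    have hr1 := hR1ne (n + 1)
    field_simp
  -- the key identity: the claimed coefficients do satisfy the recurrence
  have key : ∀ n x, x * R' n x
      = ((C n / C (n + 1)) * (R n 1 / R (n + 1) 1) * B n) * R' (n + 1) x
        + ((R (n + 2) 1 / R (n + 1) 1) * B (n + 1) - (R (n + 1) 1 / R n 1) * B n
            + A (n + 1)) * R' n x
        + (if n = 0 then 0 else
            ((C (n - 1) / C n) * (R (n - 1) 1 / R n 1) * B (n - 1)) * R' (n - 1) x) := by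
    intro n x
    apply mul_right_cancel₀ (mul_ne_zero (hR1ne (n + 1)) (hR1ne n))
    match n with
    | 0 =>
      rw [if_pos rfl]
      have hcd := hCD 0 x
      rw [hR' 0 x, hR' 1 x]
      simp only [Finset.sum_range_succ, Finset.sum_range_zero, zero_add] at hcd ⊢
      linear_combination (C 0 * R 1 1 * R 0 1) * hcd
        - (R 1 1 * R 0 1 * R 1 x + R 0 1 ^ 2 * R 0 x) * hbC1 0
        + (C 0 * R 0 1 ^ 2 * R 0 x) * hrec1 0
        - (C 0 * R 0 1 * R 0 x) * haa4 0
    | m + 1 =>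
      rw [if_neg (Nat.succ_ne_zero m), Nat.add_sub_cancel]
      have hcd := hCD (m + 1) x
      rw [hR' (m + 1) x, hR' (m + 2) x, hR' m x]
      rw [show m + 2 + 1 = (m + 2) + 1 from rfl]
      rw [Finset.sum_range_succ (n := m + 2), Finset.sum_range_succ (n := m + 1)]
      rw [Finset.sum_range_succ (n := m + 1)] at hcd
      linear_combination
        (C (m + 1) * R (m + 2) 1 * R (m + 1) 1) * hcd
        - (R (m + 2) 1 * R (m + 1) 1 * R (m + 2) x
            + R (m + 1) 1 * ((∑ k ∈ Finset.range (m + 1), R k 1 * R k x)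
              + R (m + 1) 1 * R (m + 1) x)) * hbC1 (m + 1)
        + (R (m + 2) 1 * R (m + 1) 1 * R (m + 1) x
            - R (m + 2) 1 * ((∑ k ∈ Finset.range (m + 1), R k 1 * R k x)
              + R (m + 1) 1 * R (m + 1) x)) * hbC2 m
        + (C (m + 1) * R (m + 1) 1 * ((∑ k ∈ Finset.range (m + 1), R k 1 * R k x)
              + R (m + 1) 1 * R (m + 1) x)) * hrec1 (m + 1)
        - (C (m + 1) * ((∑ k ∈ Finset.range (m + 1), R k 1 * R k x)
              + R (m + 1) 1 * R (m + 1) x)) * haa4 (m + 1)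
  -- polynomial representation of the R' family
  have hpne : ∀ n, (p n).coeff n ≠ 0 := by
    intro n
    have hne : p n ≠ 0 := by
      intro h
      exact hR1ne n (by rw [hpev n 1, h, Polynomial.eval_zero])
    have h := Polynomial.leadingCoeff_ne_zero.mpr hne
    rwa [Polynomial.leadingCoeff, hpdeg n] at h
  have hqev : ∀ n x, R' n x
      = Polynomial.eval x (C n • ∑ k ∈ Finset.range (n + 1), R k 1 • p k) := by
    intro n x
    rw [hR']
    rw [Polynomial.eval_smul, Polynomial.eval_finset_sum, smul_eq_mul]
    congr 1
    refine Finset.sum_congr rfl fun k _ => ?_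
    rw [Polynomial.eval_smul, smul_eq_mul, hpev k x]
  have hqtop : ∀ n, Polynomial.coeff (C n • ∑ k ∈ Finset.range (n + 1), R k 1 • p k) n
      = C n * (R n 1 * (p n).coeff n) := by
    intro n
    rw [Polynomial.coeff_smul, Polynomial.finset_sum_coeff, Finset.sum_range_succ]
    rw [Finset.sum_eq_zero, zero_add, Polynomial.coeff_smul, smul_eq_mul, smul_eq_mul]
    intro k hk
    rw [Polynomial.coeff_smul, Polynomial.coeff_eq_zero_of_natDegree_lt, smul_zero]
    rw [hpdeg]
    exact Finset.mem_range.mp hk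
  have hqhi : ∀ n m, n < m
      → Polynomial.coeff (C n • ∑ k ∈ Finset.range (n + 1), R k 1 • p k) m = 0 := by
    intro n m hnm
    rw [Polynomial.coeff_smul, Polynomial.finset_sum_coeff, Finset.sum_eq_zero, smul_zero]
    intro k hk
    rw [Polynomial.coeff_smul, Polynomial.coeff_eq_zero_of_natDegree_lt, smul_zero]
    rw [hpdeg]
    exact lt_of_le_of_lt (Nat.le_of_lt_succ (Finset.mem_range.mp hk)) hnm
  -- uniqueness of the recurrence coefficients
  have huniq : ∀ n (u v : ℝ), (∀ x, u * R' (n + 1) x + v * R' n x = 0) → u = 0 ∧ v = 0 := by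
    intro n u v h
    have hPQ : u • (C (n + 1) • ∑ k ∈ Finset.range (n + 2), R k 1 • p k)
        + v • (C n • ∑ k ∈ Finset.range (n + 1), R k 1 • p k) = 0 := by
      apply Polynomial.funext
      intro r
      have hh := h r
      rw [hqev (n + 1) r, hqev n r] at hh
      simp only [Polynomial.eval_add, Polynomial.eval_smul, Polynomial.eval_zero,
        smul_eq_mul] at hh ⊢
      linarith
    have hco : ∀ j,
        u * Polynomial.coeff (C (n + 1) • ∑ k ∈ Finset.range (n + 2), R k 1 • p k) j
        + v * Polynomial.coeff (C n • ∑ k ∈ Finset.range (n + 1), R k 1 • p k) j = 0 := by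
      intro j
      have := congrArg (fun pp => Polynomial.coeff pp j) hPQ
      simpa [Polynomial.coeff_add, Polynomial.coeff_smul, smul_eq_mul] using this
    have hu : u = 0 := by
      have h1 := hco (n + 1)
      rw [hqhi n (n + 1) (lt_add_one n), mul_zero, add_zero, hqtop (n + 1)] at h1
      have hne : C (n + 1) * (R (n + 1) 1 * (p (n + 1)).coeff (n + 1)) ≠ 0 :=
        mul_ne_zero (hCne _) (mul_ne_zero (hR1ne _) (hpne _))
      exact (mul_eq_zero.mp h1).resolve_right hne
    refine ⟨hu, ?_⟩
    have h1 := hco n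
    rw [hu, zero_mul, zero_add, hqtop n] at h1
    have hne : C n * (R n 1 * (p n).coeff n) ≠ 0 :=
      mul_ne_zero (hCne _) (mul_ne_zero (hR1ne _) (hpne _))
    exact (mul_eq_zero.mp h1).resolve_right hne
  -- conclude by induction
  intro n
  induction n with
  | zero =>
    have h0 : ∀ x, (B' 0 - (C 0 / C (0 + 1)) * (R 0 1 / R (0 + 1) 1) * B 0) * R' (0 + 1) x
        + (A' 0 - ((R (0 + 2) 1 / R (0 + 1) 1) * B (0 + 1)
            - (R (0 + 1) 1 / R 0 1) * B 0 + A (0 + 1))) * R' 0 x = 0 := by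
      intro x
      have h1 := hrec' 0 x
      have h2 := key 0 x
      rw [if_pos rfl] at h1 h2
      linear_combination h2 - h1
    obtain ⟨hu, hv⟩ := huniq 0 _ _ h0
    constructor
    · linarith
    · linarith
  | succ m ih =>
    have h0 : ∀ x, (B' (m + 1) - (C (m + 1) / C (m + 1 + 1)) * (R (m + 1) 1 / R (m + 1 + 1) 1)
          * B (m + 1)) * R' (m + 1 + 1) x
        + (A' (m + 1) - ((R (m + 1 + 2) 1 / R (m + 1 + 1) 1) * B (m + 1 + 1)
            - (R (m + 1 + 1) 1 / R (m + 1) 1) * B (m + 1) + A (m + 1 + 1))) * R' (m + 1) x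
        = 0 := by
      intro x
      have h1 := hrec' (m + 1) x
      have h2 := key (m + 1) x
      rw [if_neg (Nat.succ_ne_zero m), Nat.add_sub_cancel] at h1 h2
      have hB := ih.2
      linear_combination h2 - h1 - R' m x * hB
    obtain ⟨hu, hv⟩ := huniq (m + 1) _ _ h0
    constructor
    · linarith
    · linarith
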